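/- Let u : [0,T] → ℝ^d be continuous, let V : ℝ^d → ℝ be convex and differentiable, and fix t ∈ (0,T] and α ∈ (0,1). If the integral ∫₀ᵗ (u(t) − u(τ))/(t−τ)^{α+1} dτ converges absolutely, then ∫₀ᵗ (V(u(t)) − V(u(τ)))/(t−τ)^{α+1} dτ ≤ ∫₀ᵗ ⟨∇V(u(t)), u(t) − u(τ)⟩/(t−τ)^{α+1} dτ, where the left integrand is dominated above by the right integrand pointwise. -/

import Mathlib

open RealInnerProductSpace MeasureTheory Metric Bornology

lemma grad_ineq_aux {d : ℕ} (V : EuclideanSpace ℝ (Fin d) → ℝ)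
    (hconv : ConvexOn ℝ Set.univ V) (hdiff : Differentiable ℝ V)
    (x y : EuclideanSpace ℝ (Fin d)) :
    V x - V y ≤ ⟪gradient V x, x - y⟫ := by
  set c : ℝ → EuclideanSpace ℝ (Fin d) := fun s => y + s • (x - y) with hc
  have hcderiv : HasDerivAt c (x - y) 1 := by
    have : HasDerivAt (fun s : ℝ => s • (x - y)) ((1:ℝ) • (x - y)) 1 :=
      (hasDerivAt_id 1).smul_const (x - y)
    simpa [hc] using this.const_add y
  have hc1 : c 1 = x := by simp [hc]
  have hfd : HasFDerivAt V (InnerProductSpace.toDual ℝ _ (gradient V x)) (c 1) := by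
    rw [hc1]; exact ((hdiff x).hasGradientAt).hasFDerivAt
  have hg : HasDerivAt (V ∘ c) ⟪gradient V x, x - y⟫ 1 := by
    have := hfd.comp_hasDerivAt 1 hcderiv
    simpa [InnerProductSpace.toDual_apply_apply] using this
  have hgconv : ConvexOn ℝ Set.univ (V ∘ c) := by
    have haff : ConvexOn ℝ ((AffineMap.lineMap y x : ℝ →ᵃ[ℝ] _) ⁻¹' Set.univ)
        (V ∘ (AffineMap.lineMap y x : ℝ →ᵃ[ℝ] _)) :=
      hconv.comp_affineMap _
    have : (V ∘ c) = V ∘ (AffineMap.lineMap y x : ℝ →ᵃ[ℝ] _) := by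
      funext s; simp [hc, AffineMap.lineMap_apply, Function.comp]
      congr 1
      module
    rw [this]
    simpa using haff
  have h01 : (0:ℝ) < 1 := one_pos
  have := hgconv.slope_le_of_hasDerivAt (Set.mem_univ (0:ℝ)) (Set.mem_univ (1:ℝ)) h01 hg
  have hslope : slope (V ∘ c) 0 1 = V x - V y := by
    simp [slope, hc1, hc, Function.comp]
  rw [hslope] at this
  exact this

theorem integral_gradient_ineq (d : ℕ) (α T t : ℝ) (hα : α ∈ Set.Ioo (0:ℝ) 1)
    (hT : 0 < T) (ht : t ∈ Set.Ioc (0:ℝ) T)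
    (u : ℝ → EuclideanSpace ℝ (Fin d)) (hu : ContinuousOn u (Set.Icc 0 T))
    (V : EuclideanSpace ℝ (Fin d) → ℝ)
    (hconv : ConvexOn ℝ Set.univ V) (hdiff : Differentiable ℝ V)
    (hint : IntegrableOn (fun τ => ‖u t - u τ‖ / (t - τ) ^ (α + 1)) (Set.Ioo 0 t)) :
    (∫ τ in Set.Ioo 0 t, (V (u t) - V (u τ)) / (t - τ) ^ (α + 1)) ≤
      ∫ τ in Set.Ioo 0 t, ⟪gradient V (u t), u t - u τ⟫ / (t - τ) ^ (α + 1) := by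
  have htT : t ∈ Set.Icc 0 T := ⟨ht.1.le, ht.2⟩
  have hsub : Set.Ioo 0 t ⊆ Set.Icc 0 T := fun τ hτ => ⟨hτ.1.le, hτ.2.le.trans ht.2⟩
  -- continuity of u on Ioo 0 t
  have huo : ContinuousOn u (Set.Ioo 0 t) := hu.mono hsub
  -- a radius bounding the image of u
  obtain ⟨R, hR⟩ : ∃ R, u '' Set.Icc 0 T ⊆ ball 0 R := by
    obtain ⟨R, hR⟩ := ((isCompact_Icc.image_of_continuousOn hu).isBounded).subset_ball 0
    exact ⟨R, hR⟩
  have humem : ∀ s ∈ Set.Icc 0 T, u s ∈ ball (0 : EuclideanSpace ℝ (Fin d)) R :=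
    fun s hs => hR ⟨s, hs, rfl⟩
  have hRpos : 0 < R := by
    have := humem 0 ⟨le_rfl, hT.le⟩
    have h0 := mem_ball.1 this
    have := dist_nonneg (x := u 0) (y := (0 : EuclideanSpace ℝ (Fin d)))
    linarith
  -- Lipschitz constant for V on ball 0 (R+1) ⊇ image of u
  obtain ⟨L, hL⟩ : ∃ L : NNReal, LipschitzOnWith L V (ball (0 : EuclideanSpace ℝ (Fin d)) (R + 1)) := by
    have hVb : ConvexOn ℝ (ball (0 : EuclideanSpace ℝ (Fin d)) (R + 2)) V :=
      hconv.subset (Set.subset_univ _) (convex_ball _ _)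
    refine hVb.exists_lipschitzOnWith_of_isBounded (by linarith) ?_
    have hcb : IsCompact (closedBall (0 : EuclideanSpace ℝ (Fin d)) (R + 2)) :=
      isCompact_closedBall _ _
    have : IsBounded (V '' closedBall (0 : EuclideanSpace ℝ (Fin d)) (R + 2)) :=
      (hcb.image_of_continuousOn hdiff.continuous.continuousOn).isBounded
    exact this.subset (Set.image_mono ball_subset_closedBall)
  have hmemb : ∀ s ∈ Set.Icc 0 T, u s ∈ ball (0 : EuclideanSpace ℝ (Fin d)) (R + 1) :=
    fun s hs => ball_subset_ball (by linarith) (humem s hs)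
  -- measurability / integrability
  have hrpowpos : ∀ τ ∈ Set.Ioo 0 t, (0:ℝ) < (t - τ) ^ (α + 1) := by
    intro τ hτ
    exact Real.rpow_pos_of_pos (by linarith [hτ.2]) _
  have hrpow_cont : ContinuousOn (fun τ : ℝ => (t - τ) ^ (α + 1)) (Set.Ioo 0 t) := by
    apply ContinuousOn.rpow_const
    · exact (continuous_const.sub continuous_id).continuousOn
    · intro τ hτ; left; exact ne_of_gt (by linarith [hτ.2])
  have hrpow_ne : ∀ τ ∈ Set.Ioo 0 t, (t - τ) ^ (α + 1) ≠ 0 :=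
    fun τ hτ => ne_of_gt (hrpowpos τ hτ)
  have hint1 : IntegrableOn (fun τ => (V (u t) - V (u τ)) / (t - τ) ^ (α + 1)) (Set.Ioo 0 t) := by
    have hmeas : AEStronglyMeasurable (fun τ => (V (u t) - V (u τ)) / (t - τ) ^ (α + 1))
        (volume.restrict (Set.Ioo 0 t)) := by
      apply ContinuousOn.aestronglyMeasurable _ measurableSet_Ioo
      exact ((continuousOn_const.sub (hdiff.continuous.comp_continuousOn huo)).div
        hrpow_cont hrpow_ne)
    refine Integrable.mono (hint.const_mul (L : ℝ)) hmeas ?_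
    filter_upwards [ae_restrict_mem measurableSet_Ioo] with τ hτ
    rw [Real.norm_eq_abs, Real.norm_eq_abs, abs_div, abs_of_pos (hrpowpos τ hτ), div_le_iff₀ (hrpowpos τ hτ)]
    have hd : |V (u t) - V (u τ)| ≤ (L : ℝ) * ‖u t - u τ‖ := by
      have := hL.dist_le_mul (u t) (hmemb t htT) (u τ) (hmemb τ (hsub hτ))
      simpa [Real.dist_eq, dist_eq_norm] using this
    calc |V (u t) - V (u τ)| ≤ (L : ℝ) * ‖u t - u τ‖ := hd
      _ = (L : ℝ) * (‖u t - u τ‖ / (t - τ) ^ (α + 1)) * (t - τ) ^ (α + 1) := by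
          field_simp [hrpow_ne τ hτ]
      _ ≤ |(L : ℝ) * (‖u t - u τ‖ / (t - τ) ^ (α + 1))| * (t - τ) ^ (α + 1) :=
          mul_le_mul_of_nonneg_right (le_abs_self _) (hrpowpos τ hτ).le
  have hint2 : IntegrableOn (fun τ => ⟪gradient V (u t), u t - u τ⟫ / (t - τ) ^ (α + 1))
      (Set.Ioo 0 t) := by
    have hmeas : AEStronglyMeasurable
        (fun τ => ⟪gradient V (u t), u t - u τ⟫ / (t - τ) ^ (α + 1))
        (volume.restrict (Set.Ioo 0 t)) := by
      apply ContinuousOn.aestronglyMeasurable _ measurableSet_Ioo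
      exact ((Continuous.comp_continuousOn (continuous_const.inner continuous_id)
        (continuousOn_const.sub huo)).div hrpow_cont hrpow_ne)
    refine Integrable.mono (hint.const_mul ‖gradient V (u t)‖) hmeas ?_
    filter_upwards [ae_restrict_mem measurableSet_Ioo] with τ hτ
    rw [Real.norm_eq_abs, Real.norm_eq_abs, abs_div, abs_of_pos (hrpowpos τ hτ), div_le_iff₀ (hrpowpos τ hτ)]
    calc |⟪gradient V (u t), u t - u τ⟫| ≤ ‖gradient V (u t)‖ * ‖u t - u τ‖ :=
          abs_real_inner_le_norm _ _
      _ = ‖gradient V (u t)‖ * (‖u t - u τ‖ / (t - τ) ^ (α + 1)) * (t - τ) ^ (α + 1) := by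
          field_simp [hrpow_ne τ hτ]
      _ ≤ |‖gradient V (u t)‖ * (‖u t - u τ‖ / (t - τ) ^ (α + 1))| * (t - τ) ^ (α + 1) :=
          mul_le_mul_of_nonneg_right (le_abs_self _) (hrpowpos τ hτ).le
  refine setIntegral_mono_on hint1 hint2 measurableSet_Ioo ?_
  intro τ hτ
  have h := grad_ineq_aux V hconv hdiff (u t) (u τ)
  exact div_le_div_of_nonneg_right h (hrpowpos τ hτ).le
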